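/- Let m ≥ 1 and let J be a finite set of jobs that is feasible on m machines but not feasible on m − 1 machines. Then there exists a nonempty finite set I ⊆ ℤ such that C(J, I) > (m − 1)·|I|; equivalently, ⌈C(J, I)/|I|⌉ = m for this I. (This is the hard direction of Theorem 1, the characterization of the optimum number of machines.) -/

import Mathlib

/-- A job given by integer release date `r`, deadline `d`, and processing time `p`. -/
structure Job where
  r : ℤ
  d : ℤ
  p : ℤ
deriving DecidableEq

/-- A job is valid if `1 ≤ p` and `r + p ≤ d`. -/
def Job.valid (j : Job) : Prop := 1 ≤ j.p ∧ j.r + j.p ≤ j.d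

/-- The interval `I(j) = {t ∈ ℤ : r ≤ t < d}` of a job. -/
noncomputable def Job.interval (j : Job) : Finset ℤ := Finset.Ico j.r j.d

/-- The laxity `ℓ_j = d - r - p` of a job. -/
def Job.lax (j : Job) : ℤ := j.d - j.r - j.p

/-- The contribution `C(j, I) = max {0, |I ∩ I(j)| - ℓ_j}` of a job to a finite set `I ⊆ ℤ`. -/
noncomputable def contribution (j : Job) (I : Finset ℤ) : ℤ :=
  max 0 (((I ∩ j.interval).card : ℤ) - j.lax)

/-- A finite set of jobs `J` is feasible on `m` machines. -/
def Feasible (J : Finset Job) (m : ℕ) : Prop :=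
  ∃ σ : ℤ → Finset Job,
    (∀ t, σ t ⊆ J) ∧
    (∀ t, (σ t).card ≤ m) ∧
    (∀ t, ∀ j ∈ σ t, j.r ≤ t ∧ t < j.d) ∧
    (∀ j ∈ J, ((Finset.Ico j.r j.d).filter (fun t => j ∈ σ t)).card = j.p.toNat)

open Finset

namespace SchedAux

noncomputable def cj (R P : Job → ℤ) (j : Job) (I : Finset ℤ) : ℤ :=
  max 0 (((I ∩ Finset.Ico (R j) j.d).card : ℤ) - (j.d - R j - P j))

noncomputable def FF (J : Finset Job) (R P : Job → ℤ) (I : Finset ℤ) : ℤ := ∑ j ∈ J, cj R P j I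

lemma cj_nonneg (R P : Job → ℤ) (j : Job) (I : Finset ℤ) : 0 ≤ cj R P j I :=
  le_max_left _ _

lemma FF_nonneg (J : Finset Job) (R P : Job → ℤ) (I : Finset ℤ) : 0 ≤ FF J R P I :=
  Finset.sum_nonneg fun j _ => cj_nonneg R P j I

lemma cj_mono (R P : Job → ℤ) (j : Job) {I I' : Finset ℤ} (h : I ⊆ I') :
    cj R P j I ≤ cj R P j I' := by
  apply max_le_max le_rfl
  have := Finset.card_le_card (Finset.inter_subset_inter h (Finset.Subset.refl (Finset.Ico (R j) j.d)))
  omega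

lemma cj_supermod (R P : Job → ℤ) (j : Job) (I I' : Finset ℤ) :
    cj R P j I + cj R P j I' ≤ cj R P j (I ∪ I') + cj R P j (I ∩ I') := by
  unfold cj
  set w := Finset.Ico (R j) j.d with hw
  have h1 : (I ∪ I') ∩ w = (I ∩ w) ∪ (I' ∩ w) := by
    ext x; simp only [Finset.mem_inter, Finset.mem_union]; tauto
  have h2 : (I ∩ I') ∩ w = (I ∩ w) ∩ (I' ∩ w) := by
    ext x; simp only [Finset.mem_inter]; tauto
  rw [h1, h2]
  have hm := Finset.card_union_add_card_inter (I ∩ w) (I' ∩ w)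
  have hu1 : (I ∩ w).card ≤ ((I ∩ w) ∪ (I' ∩ w)).card :=
    Finset.card_le_card Finset.subset_union_left
  have hu2 : (I' ∩ w).card ≤ ((I ∩ w) ∪ (I' ∩ w)).card :=
    Finset.card_le_card Finset.subset_union_right
  set L := j.d - R j - P j
  set a := (I ∩ w).card
  set b := (I' ∩ w).card
  set u := ((I ∩ w) ∪ (I' ∩ w)).card
  set v := ((I ∩ w) ∩ (I' ∩ w)).card
  have hU0 : (0:ℤ) ≤ max 0 ((u:ℤ) - L) := le_max_left _ _
  have hU1 : (u:ℤ) - L ≤ max 0 ((u:ℤ) - L) := le_max_right _ _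
  have hV0 : (0:ℤ) ≤ max 0 ((v:ℤ) - L) := le_max_left _ _
  have hV1 : (v:ℤ) - L ≤ max 0 ((v:ℤ) - L) := le_max_right _ _
  rcases max_cases (0:ℤ) ((a:ℤ) - L) with ⟨hA, hA'⟩ | ⟨hA, hA'⟩ <;>
    rcases max_cases (0:ℤ) ((b:ℤ) - L) with ⟨hB, hB'⟩ | ⟨hB, hB'⟩ <;>
      rw [hA, hB] <;> omega

lemma FF_supermod (J : Finset Job) (R P : Job → ℤ) (I I' : Finset ℤ) :
    FF J R P I + FF J R P I' ≤ FF J R P (I ∪ I') + FF J R P (I ∩ I') := by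
  unfold FF
  rw [← Finset.sum_add_distrib, ← Finset.sum_add_distrib]
  exact Finset.sum_le_sum fun j _ => cj_supermod R P j I I'

lemma sched :
    ∀ (N : ℕ) (J : Finset Job) (R P : Job → ℤ) (k q : ℕ) (t : ℤ),
      (∑ j ∈ J, (P j + j.d - t).toNat ≤ N) →
      (∀ j ∈ J, t ≤ R j ∧ 0 ≤ P j ∧ R j + P j ≤ j.d) →
      q ≤ k →
      (∀ I : Finset ℤ, (∀ x ∈ I, t ≤ x) →
        FF J R P I ≤ (k:ℤ) * I.card - (if t ∈ I then (q:ℤ) else 0)) →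
      ∃ σ : ℤ → Finset Job,
        (∀ s, σ s ⊆ J) ∧ (∀ s, (σ s).card ≤ k) ∧ ((σ t).card + q ≤ k) ∧
        (∀ s, ∀ j ∈ σ s, R j ≤ s ∧ s < j.d) ∧
        (∀ j ∈ J, ((Finset.Ico (R j) j.d).filter (fun s => j ∈ σ s)).card = (P j).toNat) := by
  intro N
  induction N using Nat.strong_induction_on with
  | _ N IH =>
    intro J R P k q t hN hval hqk hcond
    classical
    by_cases hP0 : ∀ j ∈ J, P j = 0
    · -- base case: nothing left to schedule
      refine ⟨fun _ => ∅, fun _ => empty_subset _, fun _ => by simp, by simpa using hqk,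
        fun s j hj => absurd hj (notMem_empty j), fun j hj => ?_⟩
      rw [hP0 j hj]
      simp
    · push_neg at hP0
      obtain ⟨j₁, hj₁J, hj₁P⟩ := hP0
      have hj₁P1 : 1 ≤ P j₁ := by
        have := (hval j₁ hj₁J).2.1; omega
      have hterm : ∀ j ∈ J, 1 ≤ P j → 2 ≤ P j + j.d - t := by
        intro j hj hPj
        have h := hval j hj
        omega
      by_cases hAdv : ∀ I : Finset ℤ, (∀ x ∈ I, t ≤ x) → t ∈ I →
          FF J R P I ≤ (k:ℤ) * ((I.card : ℤ) - 1)
      ·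
        set J' := J.filter (fun j => 1 ≤ P j) with hJ'def
        have hJ'sub : J' ⊆ J := filter_subset _ _
        have hmemJ' : ∀ j ∈ J', j ∈ J ∧ 1 ≤ P j := by
          intro j hj; exact ⟨(mem_filter.mp hj).1, (mem_filter.mp hj).2⟩
        set R' := fun j => max (R j) (t+1) with hR'def
        have hRleR' : ∀ j, R j ≤ R' j := fun j => le_max_left _ _
        have hR'ge : ∀ j, t + 1 ≤ R' j := fun j => le_max_right _ _
        have hlax : ∀ j ∈ J', R j = t → t + 1 + P j ≤ j.d := by
          intro j hj hRj
          by_contra hcon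
          obtain ⟨hjJ, hPj⟩ := hmemJ' j hj
          have hv := hval j hjJ
          have hd : j.d = t + P j := by omega
          have ht1 : ({t} : Finset ℤ) ∩ Finset.Ico (R j) j.d = {t} := by
            ext x
            simp only [Finset.mem_inter, Finset.mem_singleton, Finset.mem_Ico]
            constructor
            · tauto
            · intro hx; subst hx; exact ⟨rfl, by omega⟩
          have hcj : cj R P j {t} = 1 := by
            rw [cj, ht1, hRj, hd]; simp
          have hle : cj R P j {t} ≤ FF J R P {t} :=
            Finset.single_le_sum (fun i _ => cj_nonneg R P i {t}) hjJ
          have := hAdv {t} (by intro x hx; simp at hx; omega) (by simp)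
          simp only [Finset.card_singleton] at this
          rw [hcj] at hle
          push_cast at this
          linarith
        have hval' : ∀ j ∈ J', t + 1 ≤ R' j ∧ 0 ≤ P j ∧ R' j + P j ≤ j.d := by
          intro j hj
          obtain ⟨hjJ, hPj⟩ := hmemJ' j hj
          have hv := hval j hjJ
          refine ⟨hR'ge j, hv.2.1, ?_⟩
          rcases le_or_gt (t+1) (R j) with h | h
          · have hR'j : R' j = R j := max_eq_left h
            rw [hR'j]; exact hv.2.2
          · have hRt : R j = t := by omega
            have := hlax j hj hRt
            have hR'j : R' j = t + 1 := by rw [hRt] at *; exact max_eq_right (by omega)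
            omega
        have hkeyc : ∀ j ∈ J', ∀ I : Finset ℤ, (∀ x ∈ I, t + 1 ≤ x) →
            cj R' P j I = cj R P j (insert t I) := by
          intro j hj I hI
          obtain ⟨hjJ, hPj⟩ := hmemJ' j hj
          have hv := hval j hjJ
          rcases le_or_gt (t+1) (R j) with h | h
          · have hR'j : R' j = R j := max_eq_left h
            have heq : (insert t I) ∩ Finset.Ico (R j) j.d = I ∩ Finset.Ico (R j) j.d := by
              ext x
              simp only [Finset.mem_inter, Finset.mem_insert, Finset.mem_Ico]
              constructor
              · rintro ⟨hx1 | hx1, hx2⟩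
                · omega
                · exact ⟨hx1, hx2⟩
              · tauto
            rw [cj, cj, hR'j, heq]
          · have hRt : R j = t := by have := hv.1; omega
            have hR'j : R' j = t + 1 := by rw [hR'def]; simp only; rw [hRt]; exact max_eq_right (by omega)
            have hdj : t + 1 ≤ j.d := by have := hlax j hj hRt; omega
            have hins : (insert t I) ∩ Finset.Ico (R j) j.d
                = insert t (I ∩ Finset.Ico (t+1) j.d) := by
              ext x
              simp only [Finset.mem_inter, Finset.mem_insert, Finset.mem_Ico, hRt]
              constructor
              · rintro ⟨hx1 | hx1, hx2⟩
                · left; exact hx1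
                · right; exact ⟨hx1, hI x hx1, hx2.2⟩
              · rintro (hx | ⟨hx1, hx2, hx3⟩)
                · subst hx; exact ⟨Or.inl rfl, by omega⟩
                · exact ⟨Or.inr hx1, by omega⟩
            have hnot : t ∉ I ∩ Finset.Ico (t+1) j.d := by
              simp only [Finset.mem_inter, Finset.mem_Ico]
              intro h'; omega
            rw [cj, cj, hR'j, hins, Finset.card_insert_of_notMem hnot, hRt]
            congr 1
            push_cast
            ring
        have hcond' : ∀ I : Finset ℤ, (∀ x ∈ I, t + 1 ≤ x) →
            FF J' R' P I ≤ (k:ℤ) * I.card := by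
          intro I hI
          have htI : t ∉ I := by intro h; have := hI t h; omega
          have h1 : FF J' R' P I = ∑ j ∈ J', cj R P j (insert t I) :=
            Finset.sum_congr rfl fun j hj => hkeyc j hj I hI
          have h2 : ∑ j ∈ J', cj R P j (insert t I) ≤ FF J R P (insert t I) :=
            Finset.sum_le_sum_of_subset_of_nonneg hJ'sub
              (fun j _ _ => cj_nonneg R P j _)
          have h3 := hAdv (insert t I)
            (by intro x hx
                rcases Finset.mem_insert.mp hx with h | h
                · omega
                · have := hI x h; omega)
            (Finset.mem_insert_self t I)
          have hcard : ((insert t I).card : ℤ) = (I.card : ℤ) + 1 := by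
            rw [Finset.card_insert_of_notMem htI]; push_cast; ring
          rw [hcard] at h3
          have heq : (k:ℤ) * ((I.card : ℤ) + 1 - 1) = (k:ℤ) * I.card := by ring
          rw [heq] at h3
          linarith
        have hmeas : ∑ j ∈ J', (P j + j.d - (t+1)).toNat < N := by
          have hstep : ∀ j ∈ J', (P j + j.d - (t+1)).toNat + 1 = (P j + j.d - t).toNat := by
            intro j hj
            obtain ⟨hjJ, hPj⟩ := hmemJ' j hj
            have := hterm j hjJ hPj
            omega
          have hj₁J' : j₁ ∈ J' := mem_filter.mpr ⟨hj₁J, hj₁P1⟩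
          have h1 : ∑ j ∈ J', ((P j + j.d - (t+1)).toNat + 1) = ∑ j ∈ J', (P j + j.d - t).toNat :=
            Finset.sum_congr rfl hstep
          rw [Finset.sum_add_distrib] at h1
          have h2 : ∑ j ∈ J', (P j + j.d - t).toNat ≤ ∑ j ∈ J, (P j + j.d - t).toNat :=
            Finset.sum_le_sum_of_subset hJ'sub
          have h3 : 1 ≤ J'.card := Finset.card_pos.mpr ⟨j₁, hj₁J'⟩
          simp only [Finset.sum_const, smul_eq_mul, mul_one] at h1
          omega
        obtain ⟨σ', hσ'1, hσ'2, hσ'3, hσ'4, hσ'5⟩ :=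
          IH _ hmeas J' R' P k 0 (t+1) le_rfl hval' (Nat.zero_le k) (by
            intro I hI
            have := hcond' I hI
            simpa using this)
        refine ⟨σ', fun s => (hσ'1 s).trans hJ'sub, hσ'2, ?_, ?_, ?_⟩
        · have hempty : σ' t = ∅ := by
            rw [Finset.eq_empty_iff_forall_notMem]
            intro j hj
            have h1 := (hσ'4 t j hj).1
            have h2 := hR'ge j
            omega
          rw [hempty]; simpa using hqk
        · intro s j hj
          have h1 := hσ'4 s j hj
          exact ⟨le_trans (hRleR' j) h1.1, h1.2⟩
        · intro j hj
          by_cases hjJ' : j ∈ J'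
          · have h5 := hσ'5 j hjJ'
            have hfe : (Finset.Ico (R j) j.d).filter (fun s => j ∈ σ' s)
                = (Finset.Ico (R' j) j.d).filter (fun s => j ∈ σ' s) := by
              ext s
              simp only [Finset.mem_filter, Finset.mem_Ico]
              constructor
              · rintro ⟨⟨h1, h2⟩, h3⟩
                exact ⟨⟨(hσ'4 s j h3).1, h2⟩, h3⟩
              · rintro ⟨⟨h1, h2⟩, h3⟩
                have := hRleR' j
                exact ⟨⟨by omega, h2⟩, h3⟩
            rw [hfe, h5]
          · have hPj : P j = 0 := by
              have h1 := (hval j hj).2.1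
              have h2 : ¬ (1 ≤ P j) := fun h => hjJ' (mem_filter.mpr ⟨hj, h⟩)
              omega
            have hemp : (Finset.Ico (R j) j.d).filter (fun s => j ∈ σ' s) = ∅ := by
              rw [Finset.eq_empty_iff_forall_notMem]
              intro s hs
              exact hjJ' (hσ'1 s (Finset.mem_filter.mp hs).2)
            rw [hemp, hPj]
            simp

      ·
        push_neg at hAdv
        obtain ⟨I₁, hI₁t, htI₁, hI₁big⟩ := hAdv
        have hqk' : q < k := by
          have h1 := hcond I₁ hI₁t
          rw [if_pos htI₁] at h1
          have heq : (k:ℤ) * ((I₁.card:ℤ) - 1) = (k:ℤ) * I₁.card - k := by ring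
          rw [heq] at hI₁big
          have : (q:ℤ) < (k:ℤ) := by linarith
          exact_mod_cast this
        -- contributor lemma
        have hcontrib : ∀ I : Finset ℤ, (∀ x ∈ I, t ≤ x) → t ∈ I →
            (k:ℤ) * ((I.card:ℤ) - 1) < FF J R P I →
            ∃ j ∈ J, R j = t ∧ 1 ≤ P j ∧ 0 < cj R P j I := by
          intro I hIt htI hbig
          by_contra hno
          push_neg at hno
          have hle : FF J R P I ≤ FF J R P (I.erase t) := by
            apply Finset.sum_le_sum
            intro j hj
            rcases le_or_gt (cj R P j I) 0 with h0 | h0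
            · exact le_trans h0 (cj_nonneg R P j _)
            · have hv := hval j hj
              have htw : t ∉ Finset.Ico (R j) j.d := by
                intro htw
                rw [Finset.mem_Ico] at htw
                have hRj : R j = t := by omega
                by_cases hPj : 1 ≤ P j
                · exact absurd (hno j hj hRj hPj) (not_le.mpr h0)
                · have hP0' : P j = 0 := by omega
                  have hcb : ((I ∩ Finset.Ico (R j) j.d).card : ℤ) ≤ j.d - R j := by
                    have h1 := Finset.card_le_card
                      (Finset.inter_subset_right (s₁ := I) (s₂ := Finset.Ico (R j) j.d))
                    have h2 : (Finset.Ico (R j) j.d).card = (j.d - R j).toNat :=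
                      Int.card_Ico _ _
                    omega
                  have hle0 : cj R P j I ≤ 0 := by
                    rw [cj]
                    apply max_le le_rfl
                    omega
                  omega
              have heq2 : (I.erase t) ∩ Finset.Ico (R j) j.d = I ∩ Finset.Ico (R j) j.d := by
                ext y
                simp only [Finset.mem_inter, Finset.mem_erase]
                constructor
                · tauto
                · intro hy
                  refine ⟨⟨?_, hy.1⟩, hy.2⟩
                  rintro rfl
                  exact htw hy.2
              rw [cj, cj, heq2]
          have hce := hcond (I.erase t) (fun y hy => hIt y (Finset.mem_of_mem_erase hy))
          rw [if_neg (Finset.notMem_erase t I)] at hce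
          have hc1 : 1 ≤ I.card := Finset.card_pos.mpr ⟨t, htI⟩
          have hcard : ((I.erase t).card : ℤ) = (I.card : ℤ) - 1 := by
            rw [Finset.card_erase_of_mem htI]
            omega
          rw [hcard] at hce
          linarith
        -- tight family
        have hJne : J.Nonempty := ⟨j₁, hj₁J⟩
        set D := J.sup' hJne (fun j => j.d) with hDdef
        have hDge : ∀ j ∈ J, j.d ≤ D := fun j hj => Finset.le_sup' _ hj
        set TT := (Finset.Ico t D).powerset.filter
            (fun I => t ∈ I ∧ FF J R P I = (k:ℤ) * I.card - q) with hTTdef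
        have htight_mem : ∀ I : Finset ℤ, (∀ x ∈ I, t ≤ x) → t ∈ I →
            FF J R P I = (k:ℤ) * I.card - q → I ∈ TT := by
          intro I hIt htI hFI
          rw [hTTdef, Finset.mem_filter, Finset.mem_powerset]
          refine ⟨?_, htI, hFI⟩
          intro x hx
          rw [Finset.mem_Ico]
          refine ⟨hIt x hx, ?_⟩
          by_contra hxD
          push_neg at hxD
          have hxw : ∀ j ∈ J, x ∉ Finset.Ico (R j) j.d := by
            intro j hj hmem
            rw [Finset.mem_Ico] at hmem
            have := hDge j hj
            omega
          have hFe : FF J R P (I.erase x) = FF J R P I := by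
            apply Finset.sum_congr rfl
            intro j hj
            have heq3 : (I.erase x) ∩ Finset.Ico (R j) j.d = I ∩ Finset.Ico (R j) j.d := by
              ext y
              simp only [Finset.mem_inter, Finset.mem_erase]
              constructor
              · tauto
              · intro hy
                refine ⟨⟨?_, hy.1⟩, hy.2⟩
                rintro rfl
                exact hxw j hj hy.2
            rw [cj, cj, heq3]
          have hc1 : 1 ≤ I.card := Finset.card_pos.mpr ⟨x, hx⟩
          have hcard : ((I.erase x).card : ℤ) = (I.card : ℤ) - 1 := by
            rw [Finset.card_erase_of_mem hx]
            omega
          have hce := hcond (I.erase x) (fun y hy => hIt y (Finset.mem_of_mem_erase hy))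
          have hkq : (q:ℤ) < (k:ℤ) := by exact_mod_cast hqk'
          by_cases hxt : x = t
          · subst hxt
            rw [if_neg (Finset.notMem_erase x I)] at hce
            rw [hFe, hFI, hcard] at hce
            have hk : (k:ℤ) * ((I.card:ℤ) - 1) = (k:ℤ) * I.card - k := by ring
            rw [hk] at hce
            linarith
          · have htmem : t ∈ I.erase x := Finset.mem_erase.mpr ⟨Ne.symm hxt, htI⟩
            rw [if_pos htmem] at hce
            rw [hFe, hFI, hcard] at hce
            have hk : (k:ℤ) * ((I.card:ℤ) - 1) = (k:ℤ) * I.card - k := by ring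
            rw [hk] at hce
            linarith
        -- key job
        have hkey : ∃ js ∈ J, R js = t ∧ 1 ≤ P js ∧
            (∀ I : Finset ℤ, (∀ x ∈ I, t ≤ x) → t ∈ I →
              FF J R P I = (k:ℤ) * I.card - q → 0 < cj R P js I) := by
          rcases Finset.eq_empty_or_nonempty TT with hTTe | hTTne
          · obtain ⟨js, hjsJ, h1, h2, h3⟩ := hcontrib I₁ hI₁t htI₁ hI₁big
            refine ⟨js, hjsJ, h1, h2, fun I hIt htI hFI => ?_⟩
            exact absurd (htight_mem I hIt htI hFI)
              (by rw [hTTe]; exact Finset.notMem_empty I)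
          · have hTTclosed : ∀ X ∈ (↑TT : Set (Finset ℤ)), ∀ Y ∈ (↑TT : Set (Finset ℤ)),
                X ⊓ Y ∈ (↑TT : Set (Finset ℤ)) := by
              intro X hX Y hY
              rw [Finset.mem_coe, hTTdef, Finset.mem_filter, Finset.mem_powerset] at hX hY
              obtain ⟨hXsub, htX, hFX⟩ := hX
              obtain ⟨hYsub, htY, hFY⟩ := hY
              rw [Finset.mem_coe]
              have hXt : ∀ x ∈ X, t ≤ x := fun x hx => (Finset.mem_Ico.mp (hXsub hx)).1
              have hYt : ∀ x ∈ Y, t ≤ x := fun x hx => (Finset.mem_Ico.mp (hYsub hx)).1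
              have hinf : X ⊓ Y = X ∩ Y := rfl
              rw [hinf]
              apply htight_mem
              · intro x hx
                exact hXt x (Finset.mem_of_mem_inter_left hx)
              · exact Finset.mem_inter.mpr ⟨htX, htY⟩
              · have hsup := FF_supermod J R P X Y
                have hcu := hcond (X ∪ Y) (by
                  intro x hx
                  rcases Finset.mem_union.mp hx with h | h
                  exacts [hXt x h, hYt x h])
                rw [if_pos (Finset.mem_union_left Y htX)] at hcu
                have hci := hcond (X ∩ Y)
                  (fun x hx => hXt x (Finset.mem_of_mem_inter_left hx))
                rw [if_pos (Finset.mem_inter.mpr ⟨htX, htY⟩)] at hci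
                have hcc : ((X ∪ Y).card : ℤ) + ((X ∩ Y).card : ℤ)
                    = (X.card : ℤ) + Y.card := by
                  exact_mod_cast Finset.card_union_add_card_inter X Y
                have hmul : (k:ℤ) * ((X ∪ Y).card : ℤ) + (k:ℤ) * ((X ∩ Y).card : ℤ)
                    = (k:ℤ) * (X.card : ℤ) + (k:ℤ) * (Y.card : ℤ) := by
                  rw [← mul_add, ← mul_add, hcc]
                apply le_antisymm hci
                linarith
            have hI₀TT : TT.inf' hTTne id ∈ TT := by
              have h := Finset.inf'_mem (↑TT : Set (Finset ℤ)) hTTclosed TT hTTne id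
                (fun i hi => Finset.mem_coe.mpr hi)
              exact Finset.mem_coe.mp h
            set I₀ := TT.inf' hTTne id with hI₀def
            have hI₀TT' := hI₀TT
            rw [hTTdef, Finset.mem_filter, Finset.mem_powerset] at hI₀TT'
            obtain ⟨hI₀sub, htI₀, hFI₀⟩ := hI₀TT'
            have hI₀t : ∀ x ∈ I₀, t ≤ x := fun x hx => (Finset.mem_Ico.mp (hI₀sub hx)).1
            have hbig : (k:ℤ) * ((I₀.card:ℤ) - 1) < FF J R P I₀ := by
              rw [hFI₀]
              have hk : (k:ℤ) * ((I₀.card:ℤ) - 1) = (k:ℤ) * I₀.card - k := by ring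
              rw [hk]
              have : (q:ℤ) < k := by exact_mod_cast hqk'
              linarith
            obtain ⟨js, hjsJ, h1, h2, h3⟩ := hcontrib I₀ hI₀t htI₀ hbig
            refine ⟨js, hjsJ, h1, h2, ?_⟩
            intro I hIt htI hFI
            have hITT := htight_mem I hIt htI hFI
            have hsub : I₀ ⊆ I := Finset.inf'_le id hITT
            exact lt_of_lt_of_le h3 (cj_mono R P js hsub)
        obtain ⟨js, hjsJ, hjsR, hjsP, hjstight⟩ := hkey
        have hjsv := hval js hjsJ
        have hjsd : t + 1 ≤ js.d := by omega
        set R'' := Function.update R js (t+1) with hR''def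
        set P'' := Function.update P js (P js - 1) with hP''def
        have hR''js : R'' js = t + 1 := Function.update_self js (t+1) R
        have hP''js : P'' js = P js - 1 := Function.update_self js (P js - 1) P
        have hR''ne : ∀ j, j ≠ js → R'' j = R j := fun j hj => Function.update_of_ne hj _ _
        have hP''ne : ∀ j, j ≠ js → P'' j = P j := fun j hj => Function.update_of_ne hj _ _
        have hwins : ∀ I : Finset ℤ, (∀ x ∈ I, t ≤ x) → t ∈ I →
            I ∩ Finset.Ico (R js) js.d = insert t (I ∩ Finset.Ico (t+1) js.d) := by
          intro I hIt htI
          ext x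
          simp only [Finset.mem_inter, Finset.mem_insert, Finset.mem_Ico, hjsR]
          constructor
          · rintro ⟨hx1, hx2, hx3⟩
            rcases eq_or_lt_of_le hx2 with h | h
            · left; omega
            · right; exact ⟨hx1, by omega, hx3⟩
          · rintro (hx | ⟨hx1, hx2, hx3⟩)
            · subst hx
              exact ⟨htI, le_refl _, by omega⟩
            · exact ⟨hx1, by omega, hx3⟩
        have hwnot : ∀ I : Finset ℤ, (∀ x ∈ I, t ≤ x) → t ∉ I →
            I ∩ Finset.Ico (R js) js.d = I ∩ Finset.Ico (t+1) js.d := by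
          intro I hIt htI
          ext x
          simp only [Finset.mem_inter, Finset.mem_Ico, hjsR]
          constructor
          · rintro ⟨hx1, hx2, hx3⟩
            have hxt : x ≠ t := fun h => htI (h ▸ hx1)
            have := hIt x hx1
            exact ⟨hx1, by omega, hx3⟩
          · rintro ⟨hx1, hx2, hx3⟩
            exact ⟨hx1, by omega, hx3⟩
        have hFFsplit : ∀ I : Finset ℤ,
            FF J R'' P'' I = FF J R P I - cj R P js I + cj R'' P'' js I := by
          intro I
          rw [FF, FF, ← Finset.add_sum_erase _ _ hjsJ,
            ← Finset.add_sum_erase _ (fun j => cj R P j I) hjsJ]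
          have heql : ∑ j ∈ J.erase js, cj R'' P'' j I = ∑ j ∈ J.erase js, cj R P j I := by
            apply Finset.sum_congr rfl
            intro j hj
            have hne := Finset.ne_of_mem_erase hj
            rw [cj, cj, hR''ne j hne, hP''ne j hne]
          rw [heql]
          ring
        have hcond'' : ∀ I : Finset ℤ, (∀ x ∈ I, t ≤ x) →
            FF J R'' P'' I ≤ (k:ℤ) * I.card - (if t ∈ I then ((q+1:ℕ):ℤ) else 0) := by
          intro I hIt
          by_cases htI : t ∈ I
          · rw [if_pos htI]
            have hxcard : ((I ∩ Finset.Ico (R js) js.d).card : ℤ)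
                = ((I ∩ Finset.Ico (t+1) js.d).card : ℤ) + 1 := by
              rw [hwins I hIt htI, Finset.card_insert_of_notMem (by
                simp only [Finset.mem_inter, Finset.mem_Ico]
                intro h
                omega)]
              push_cast
              ring
            have hcjold : cj R P js I
                = max 0 ((((I ∩ Finset.Ico (t+1) js.d).card : ℤ) + 1)
                    - (js.d - R js - P js)) := by
              rw [cj, hxcard]
            have hcjnew : cj R'' P'' js I
                = max 0 (((I ∩ Finset.Ico (t+1) js.d).card : ℤ)
                    - (js.d - R js - P js)) := by
              rw [cj, hR''js, hP''js, hjsR]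
              have hwin'' : I ∩ Finset.Ico (t+1) js.d = I ∩ Finset.Ico (t+1) js.d := rfl
              congr 1
              ring
            have hmono'' : cj R'' P'' js I ≤ cj R P js I := by
              rw [hcjold, hcjnew]
              apply max_le_max le_rfl
              omega
            have hdrop : 0 < cj R P js I → cj R'' P'' js I = cj R P js I - 1 := by
              intro hp
              rw [hcjold] at hp
              rw [hcjold, hcjnew]
              rcases max_cases (0:ℤ) ((((I ∩ Finset.Ico (t+1) js.d).card : ℤ) + 1)
                  - (js.d - R js - P js)) with ⟨ha1, ha2⟩ | ⟨ha1, ha2⟩ <;>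
                rcases max_cases (0:ℤ) (((I ∩ Finset.Ico (t+1) js.d).card : ℤ)
                  - (js.d - R js - P js)) with ⟨hb1, hb2⟩ | ⟨hb1, hb2⟩ <;>
                  rw [ha1, hb1] <;> rw [ha1] at hp <;> omega
            by_cases htight : FF J R P I = (k:ℤ) * I.card - q
            · have hpos := hjstight I hIt htI htight
              rw [hFFsplit I, htight, hdrop hpos]
              push_cast
              linarith
            · have hlt := hcond I hIt
              rw [if_pos htI] at hlt
              have hlt' : FF J R P I ≤ (k:ℤ) * I.card - q - 1 := by
                rcases lt_or_eq_of_le hlt with h | h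
                · have := Int.lt_iff_add_one_le.mp h
                  linarith
                · exact absurd h htight
              rw [hFFsplit I]
              push_cast
              linarith
          · rw [if_neg htI]
            have heqc : cj R'' P'' js I = cj R P js I := by
              rw [cj, cj, hwnot I hIt htI, hR''js, hP''js, hjsR]
              congr 1
              ring
            rw [hFFsplit I, heqc]
            have hc := hcond I hIt
            rw [if_neg htI] at hc
            linarith
        have hval'' : ∀ j ∈ J, t ≤ R'' j ∧ 0 ≤ P'' j ∧ R'' j + P'' j ≤ j.d := by
          intro j hj
          by_cases hne : j = js
          · subst hne
            rw [hR''js, hP''js]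
            rw [hjsR] at hjsv
            exact ⟨by omega, by omega, by omega⟩
          · rw [hR''ne j hne, hP''ne j hne]
            exact hval j hj
        have hmeas : ∑ j ∈ J, (P'' j + j.d - t).toNat < N := by
          have h2 : 2 ≤ P js + js.d - t := hterm js hjsJ hjsP
          have hsplit1 : (P'' js + js.d - t).toNat + ∑ j ∈ J.erase js, (P'' j + j.d - t).toNat
              = ∑ j ∈ J, (P'' j + j.d - t).toNat :=
            Finset.add_sum_erase J (fun j => (P'' j + j.d - t).toNat) hjsJ
          have hsplit2 : (P js + js.d - t).toNat + ∑ j ∈ J.erase js, (P j + j.d - t).toNat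
              = ∑ j ∈ J, (P j + j.d - t).toNat :=
            Finset.add_sum_erase J (fun j => (P j + j.d - t).toNat) hjsJ
          have he : ∑ j ∈ J.erase js, (P'' j + j.d - t).toNat
              = ∑ j ∈ J.erase js, (P j + j.d - t).toNat := by
            apply Finset.sum_congr rfl
            intro j hj
            rw [hP''ne j (Finset.ne_of_mem_erase hj)]
          rw [hP''js] at hsplit1
          omega
        obtain ⟨σ', hσ'1, hσ'2, hσ'3, hσ'4, hσ'5⟩ :=
          IH _ hmeas J R'' P'' k (q+1) t le_rfl hval'' (by omega) hcond''
        set σ := fun s => if s = t then insert js (σ' t) else σ' s with hσdef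
        have hjsnot : js ∉ σ' t := by
          intro h
          have := (hσ'4 t js h).1
          rw [hR''js] at this
          omega
        have hσt : σ t = insert js (σ' t) := by rw [hσdef]; simp
        have hσne : ∀ s, s ≠ t → σ s = σ' s := by
          intro s hs
          rw [hσdef]
          simp [hs]
        refine ⟨σ, ?_, ?_, ?_, ?_, ?_⟩
        · intro s
          by_cases hs : s = t
          · rw [hs, hσt]
            exact Finset.insert_subset hjsJ (hσ'1 t)
          · rw [hσne s hs]
            exact hσ'1 s
        · intro s
          by_cases hs : s = t
          · rw [hs, hσt, Finset.card_insert_of_notMem hjsnot]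
            omega
          · rw [hσne s hs]
            exact hσ'2 s
        · rw [hσt, Finset.card_insert_of_notMem hjsnot]
          omega
        · intro s j hj
          have hRle : ∀ j', R j' ≤ R'' j' := by
            intro j'
            by_cases hne : j' = js
            · subst hne; rw [hR''js, hjsR]; omega
            · rw [hR''ne j' hne]
          by_cases hs : s = t
          · rw [hs, hσt] at hj
            rcases Finset.mem_insert.mp hj with rfl | hj'
            · constructor <;> omega
            · have h1 := hσ'4 t j hj'
              have h2 := hRle j
              have h3 := h1.1
              have h4 := h1.2
              constructor <;> omega
          · rw [hσne s hs] at hj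
            have h1 := hσ'4 s j hj
            exact ⟨le_trans (hRle j) h1.1, h1.2⟩
        · intro j hj
          by_cases hne : j = js
          · subst hne
            have h5 := hσ'5 j hj
            rw [hR''js, hP''js] at h5
            have hfe : (Finset.Ico (R j) j.d).filter (fun s => j ∈ σ s)
                = insert t ((Finset.Ico (t+1) j.d).filter (fun s => j ∈ σ' s)) := by
              ext s
              simp only [Finset.mem_filter, Finset.mem_insert, Finset.mem_Ico]
              constructor
              · rintro ⟨⟨h1, h2⟩, h3⟩
                by_cases hs : s = t
                · left; exact hs
                · right
                  rw [hσne s hs] at h3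
                  have h4 := (hσ'4 s j h3).1
                  rw [hR''js] at h4
                  exact ⟨⟨h4, h2⟩, h3⟩
              · rintro (rfl | ⟨⟨h1, h2⟩, h3⟩)
                · refine ⟨⟨le_of_eq hjsR, by omega⟩, ?_⟩
                  rw [hσt]
                  exact Finset.mem_insert_self _ _
                · have hs : s ≠ t := by omega
                  rw [hσne s hs]
                  rw [hjsR]
                  exact ⟨⟨by omega, h2⟩, h3⟩
            rw [hfe, Finset.card_insert_of_notMem (by
              simp only [Finset.mem_filter, Finset.mem_Ico]
              rintro ⟨⟨h1, _⟩, _⟩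
              omega), h5]
            omega
          · have h5 := hσ'5 j hj
            rw [hR''ne j hne, hP''ne j hne] at h5
            have hfc : (Finset.Ico (R j) j.d).filter (fun s => j ∈ σ s)
                = (Finset.Ico (R j) j.d).filter (fun s => j ∈ σ' s) := by
              apply Finset.filter_congr
              intro s hs
              by_cases hst : s = t
              · subst hst
                rw [hσt]
                simp only [Finset.mem_insert]
                constructor
                · rintro (rfl | h)
                  · exact absurd rfl hne
                  · exact h
                · exact Or.inr
              · rw [hσne s hst]
            rw [hfc]
            exact h5


end SchedAux


/-- If `J` is feasible on `m ≥ 1` machines but not on `m - 1` machines,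
then there is a nonempty finite `I ⊆ ℤ` with `C(J, I) > (m - 1)·|I|`. -/
theorem exists_dense_interval_of_optimal
    (J : Finset Job) (hJ : ∀ j ∈ J, j.valid) (m : ℕ) (hm : 1 ≤ m)
    (hfeas : Feasible J m) (hinfeas : ¬ Feasible J (m - 1)) :
    ∃ I : Finset ℤ, I.Nonempty ∧
      ((m : ℤ) - 1) * I.card < ∑ j ∈ J, contribution j I := by
  classical
  by_contra hcon
  push_neg at hcon
  apply hinfeas
  rcases Finset.eq_empty_or_nonempty J with rfl | hne
  · exact ⟨fun _ => ∅, fun _ => Finset.empty_subset _, fun _ => by simp,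
      fun _ j hj => absurd hj (Finset.notMem_empty j),
      fun j hj => absurd hj (Finset.notMem_empty j)⟩
  · set t0 := J.inf' hne Job.r with ht0
    have hcast : ((m - 1 : ℕ) : ℤ) = (m : ℤ) - 1 := by omega
    have hcond : ∀ I : Finset ℤ, (∀ x ∈ I, t0 ≤ x) →
        SchedAux.FF J Job.r Job.p I ≤ ((m - 1 : ℕ) : ℤ) * I.card
          - (if t0 ∈ I then ((0:ℕ):ℤ) else 0) := by
      intro I _
      have hif : (if t0 ∈ I then ((0:ℕ):ℤ) else 0) = 0 := by simp
      rw [hif, sub_zero]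
      rcases Finset.eq_empty_or_nonempty I with rfl | hIne
      · have hFF0 : SchedAux.FF J Job.r Job.p ∅ = 0 :=
          Finset.sum_eq_zero (fun j hj => by
            obtain ⟨hv1, hv2⟩ := hJ j hj
            rw [SchedAux.cj]
            simp only [Finset.empty_inter, Finset.card_empty, Nat.cast_zero, zero_sub]
            rw [max_eq_left (by omega)])
        rw [hFF0]
        simp
      · have hFFeq : SchedAux.FF J Job.r Job.p I = ∑ j ∈ J, contribution j I := by
          apply Finset.sum_congr rfl
          intro j hj
          rw [SchedAux.cj, contribution, Job.interval, Job.lax]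
        rw [hFFeq, hcast]
        exact hcon I hIne
    obtain ⟨σ, h1, h2, h3, h4, h5⟩ :=
      SchedAux.sched (∑ j ∈ J, (j.p + j.d - t0).toNat) J Job.r Job.p (m-1) 0 t0 le_rfl
        (fun j hj => ⟨Finset.inf'_le _ hj, by have := (hJ j hj).1; omega, (hJ j hj).2⟩)
        (Nat.zero_le _) hcond
    exact ⟨σ, h1, h2, h4, h5⟩
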